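/- Let a, b, c, d, p, q, r be real numbers with a > 0, b > 0, c ≥ 0, d ≥ 0, p ≥ 0, r ≥ 0, q > 0, q ≥ |p − r| and additionally a·b ≥ c·d. Define f(u,v) = u^r v^p (a v^q − c u^q) and g(u,v) = v^r u^p (b u^q − d v^q) for u, v ≥ 0. Then the positive constant K such that (f(u,v) − K g(u,v))·(u − K v) ≤ 0 for all u, v ≥ 0 is unique: if K₁ > 0 and K₂ > 0 both satisfy this property then K₁ = K₂. -/
import Mathlib


/-- uniqueness of the proportionality constant K when a·b ≥ c·d. -/
theorem stmt_1 (a b c d p q r : ℝ)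
    (ha : 0 < a) (hb : 0 < b) (hc : 0 ≤ c) (hd : 0 ≤ d)
    (hp : 0 ≤ p) (hr : 0 ≤ r) (hq : 0 < q) (hqpr : |p - r| ≤ q)
    (habcd : c * d ≤ a * b) (K₁ K₂ : ℝ) (hK₁ : 0 < K₁) (hK₂ : 0 < K₂)
    (h₁ : ∀ u v : ℝ, 0 ≤ u → 0 ≤ v →
      (u ^ r * v ^ p * (a * v ^ q - c * u ^ q)
        - K₁ * (v ^ r * u ^ p * (b * u ^ q - d * v ^ q))) * (u - K₁ * v) ≤ 0)
    (h₂ : ∀ u v : ℝ, 0 ≤ u → 0 ≤ v →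
      (u ^ r * v ^ p * (a * v ^ q - c * u ^ q)
        - K₂ * (v ^ r * u ^ p * (b * u ^ q - d * v ^ q))) * (u - K₂ * v) ≤ 0) :
    K₁ = K₂ := by
  have key : ∀ L₁ L₂ : ℝ, 0 < L₁ →
      (∀ u v : ℝ, 0 ≤ u → 0 ≤ v →
        (u ^ r * v ^ p * (a * v ^ q - c * u ^ q)
          - L₁ * (v ^ r * u ^ p * (b * u ^ q - d * v ^ q))) * (u - L₁ * v) ≤ 0) →
      (∀ u v : ℝ, 0 ≤ u → 0 ≤ v →
        (u ^ r * v ^ p * (a * v ^ q - c * u ^ q)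
          - L₂ * (v ^ r * u ^ p * (b * u ^ q - d * v ^ q))) * (u - L₂ * v) ≤ 0) →
      L₁ < L₂ → False := by
    intro L₁ L₂ hL₁ H₁ H₂ hlt
    have step : ∀ t : ℝ, L₁ < t → t < L₂ → a ≤ c * t ^ q ∧ b * t ^ q ≤ d := by
      intro t ht₁ ht₂
      have htpos : 0 < t := hL₁.trans ht₁
      have h1 := H₁ t 1 htpos.le zero_le_one
      have h2 := H₂ t 1 htpos.le zero_le_one
      simp only [Real.one_rpow, mul_one, one_mul] at h1 h2
      have htr : 0 < t ^ r := Real.rpow_pos_of_pos htpos r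
      have htp : 0 < t ^ p := Real.rpow_pos_of_pos htpos p
      have hA : t ^ r * (a - c * t ^ q) - L₁ * (t ^ p * (b * t ^ q - d)) ≤ 0 := by
        nlinarith [h1, ht₁]
      have hB : 0 ≤ t ^ r * (a - c * t ^ q) - L₂ * (t ^ p * (b * t ^ q - d)) := by
        nlinarith [h2, ht₂]
      have hG : t ^ p * (b * t ^ q - d) ≤ 0 := by nlinarith [hA, hB, ht₁, ht₂]
      have hg : b * t ^ q - d ≤ 0 := by nlinarith [hG, htp]
      have hF : t ^ r * (a - c * t ^ q) ≤ 0 := by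
        nlinarith [hA, mul_nonpos_of_nonneg_of_nonpos hL₁.le hG]
      have hf : a - c * t ^ q ≤ 0 := by nlinarith [hF, htr]
      constructor <;> linarith
    set t₁ := (3 * L₁ + L₂) / 4 with ht₁def
    set t₂ := (L₁ + 3 * L₂) / 4 with ht₂def
    have h1 : L₁ < t₁ := by simp only [ht₁def]; linarith
    have h2 : t₁ < L₂ := by simp only [ht₁def]; linarith
    have h3 : L₁ < t₂ := by simp only [ht₂def]; linarith
    have h4 : t₂ < L₂ := by simp only [ht₂def]; linarith
    have h12 : t₁ < t₂ := by simp only [ht₁def, ht₂def]; linarith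
    obtain ⟨ha1, hb1⟩ := step t₁ h1 h2
    obtain ⟨ha2, hb2⟩ := step t₂ h3 h4
    have ht₁pos : 0 < t₁ := hL₁.trans h1
    have hqlt : t₁ ^ q < t₂ ^ q := Real.rpow_lt_rpow ht₁pos.le h12 hq
    have hX : 0 < t₁ ^ q := Real.rpow_pos_of_pos ht₁pos q
    have hY : 0 < t₂ ^ q := Real.rpow_pos_of_pos (ht₁pos.trans h12) q
    have e1 : a * (b * t₂ ^ q) ≤ c * t₁ ^ q * (b * t₂ ^ q) :=
      mul_le_mul_of_nonneg_right ha1 (mul_pos hb hY).le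
    have e2 : c * t₁ ^ q * (b * t₂ ^ q) ≤ c * t₁ ^ q * d :=
      mul_le_mul_of_nonneg_left hb2 (mul_nonneg hc hX.le)
    have e3 : c * d * t₁ ^ q ≤ a * b * t₁ ^ q :=
      mul_le_mul_of_nonneg_right habcd hX.le
    have e4 : a * b * t₁ ^ q < a * b * t₂ ^ q :=
      mul_lt_mul_of_pos_left hqlt (mul_pos ha hb)
    clear h₁ h₂ H₁ H₂ step
    linarith [e1, e2, e3, e4]
  rcases lt_trichotomy K₁ K₂ with h | h | h
  · exact absurd (key K₁ K₂ hK₁ h₁ h₂ h) (fun x => x)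
  · exact h
  · exact absurd (key K₂ K₁ hK₂ h₂ h₁ h) (fun x => x)
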